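/- Let T be an operator with CZ kernel of order m and parameter ε with respect to a measure μ satisfying μ(B(x,ρ)) ≤ ρ^m, and suppose ‖T* 1_P‖²_{L²(μ)} ≤ C₀ μ(P) for every cube P. Let S be a dyadic cube, S' = 1.1 S, and Q ⊂ S a dyadic subcube. Then ‖Δ_Q T*(1 − 1_{S'})‖²_{L²(μ)} ≤ C μ(Q) (ℓ(Q)/ℓ(S))^{2ε}, where Δ_Q is the μ-martingale difference onto Q and C depends only on d, m, ε. -/

import Mathlib

open MeasureTheory

/-- The (half-open) cube in `ℝ^d` with center `z` and side `ℓ`. -/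
def dyadicCube {d : ℕ} (z : Fin d → ℝ) (ℓ : ℝ) : Set (Fin d → ℝ) :=
  {x | ∀ i, z i - ℓ / 2 ≤ x i ∧ x i < z i + ℓ / 2}

/-- The center of the dyadic child of the cube `(z, ℓ)` with position `σ`. -/
noncomputable def childCenter {d : ℕ} (z : Fin d → ℝ) (ℓ : ℝ) (σ : Fin d → Bool) : Fin d → ℝ :=
  fun i => z i + (if σ i then ℓ / 4 else -(ℓ / 4))

/-- The μ-average of `F` over a set `A`. -/
noncomputable def cubeAvg {d : ℕ} (μ : Measure (Fin d → ℝ)) (A : Set (Fin d → ℝ))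
    (F : (Fin d → ℝ) → ℝ) : ℝ :=
  (∫ x in A, F x ∂μ) / (μ A).toReal

/-- The μ-martingale difference of `F` on the cube with center `z`, side `ℓ`:
`Δ_Q F = Σ_{Q' child of Q} ⟨F⟩_{Q',μ} 1_{Q'} − ⟨F⟩_{Q,μ} 1_Q`. -/
noncomputable def mdiff {d : ℕ} (μ : Measure (Fin d → ℝ)) (z : Fin d → ℝ) (ℓ : ℝ)
    (F : (Fin d → ℝ) → ℝ) : (Fin d → ℝ) → ℝ :=
  fun x =>
    (∑ σ : Fin d → Bool,
      Set.indicator (dyadicCube (childCenter z ℓ σ) (ℓ / 2))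
        (fun _ => cubeAvg μ (dyadicCube (childCenter z ℓ σ) (ℓ / 2)) F) x)
    - Set.indicator (dyadicCube z ℓ) (fun _ => cubeAvg μ (dyadicCube z ℓ) F) x


lemma measurableSet_dyadicCube {d : ℕ} (z : Fin d → ℝ) (ℓ : ℝ) :
    MeasurableSet (dyadicCube z ℓ) := by
  have : dyadicCube z ℓ = ⋂ i, (fun x : Fin d → ℝ => x i) ⁻¹' Set.Ico (z i - ℓ / 2) (z i + ℓ / 2) := by
    ext x; simp [dyadicCube, Set.mem_iInter, Set.mem_Ico]
  rw [this]
  exact MeasurableSet.iInter fun i => (measurable_pi_apply i) measurableSet_Ico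

lemma dist_center_le {d : ℕ} {z : Fin d → ℝ} {ℓ : ℝ} (hℓ : 0 < ℓ) {y : Fin d → ℝ}
    (hy : y ∈ dyadicCube z ℓ) : dist y z ≤ ℓ / 2 := by
  rw [dist_pi_le_iff (by linarith)]
  intro i
  rw [Real.dist_eq, abs_le]
  have := hy i
  constructor <;> linarith [this.1, this.2]

lemma far_from_S {d : ℕ} {zS : Fin d → ℝ} {ℓS : ℝ} (hℓ : 0 < ℓS) {x w : Fin d → ℝ}
    (hx : x ∉ dyadicCube zS (1.1 * ℓS)) (hw : w ∈ dyadicCube zS ℓS) :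
    ℓS / 20 ≤ dist x w := by
  simp only [dyadicCube, Set.mem_setOf_eq, not_forall] at hx
  obtain ⟨i, hi⟩ := hx
  have hwi := hw i
  have h1 : ℓS / 20 ≤ |x i - w i| := by
    rw [not_and_or] at hi
    rw [le_abs]
    rcases hi with h | h
    · push_neg at h
      norm_num at h
      right; nlinarith [hwi.1, hwi.2]
    · push_neg at h
      norm_num at h
      left; nlinarith [hwi.1, hwi.2]
  calc ℓS / 20 ≤ |x i - w i| := h1
    _ = dist (x i) (w i) := (Real.dist_eq _ _).symm
    _ ≤ dist x w := dist_le_pi_dist x w i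

lemma child_subset {d : ℕ} (z : Fin d → ℝ) (ℓ : ℝ) (σ : Fin d → Bool) :
    dyadicCube (childCenter z ℓ σ) (ℓ / 2) ⊆ dyadicCube z ℓ := by
  intro x hx i
  have := hx i
  simp only [childCenter] at this
  rcases this with ⟨h1, h2⟩
  by_cases h : σ i <;> simp [h] at h1 h2 <;> constructor <;> linarith

lemma mem_child_iff {d : ℕ} {z : Fin d → ℝ} {ℓ : ℝ} {x : Fin d → ℝ}
    (hx : x ∈ dyadicCube z ℓ) (σ : Fin d → Bool) :
    x ∈ dyadicCube (childCenter z ℓ σ) (ℓ / 2) ↔ ∀ i, σ i = decide (z i ≤ x i) := by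
  constructor
  · intro h i
    have h1 := h i
    have h2 := hx i
    simp only [childCenter] at h1
    rcases Bool.eq_false_or_eq_true (σ i) with hσ | hσ <;>
      rw [hσ] at h1 <;> norm_num at h1 <;> rw [hσ]
    · exact (decide_eq_true (by linarith [h1.1])).symm
    · exact (decide_eq_false (by push_neg; linarith [h1.2])).symm
  · intro h i
    have h2 := hx i
    have hi := h i
    simp only [childCenter]
    rcases Bool.eq_false_or_eq_true (σ i) with hσ | hσ <;> rw [hσ] <;> norm_num <;>
      rw [hσ] at hi
    · have h3 : z i ≤ x i := of_decide_eq_true hi.symm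
      refine ⟨by linarith, by linarith [h2.2]⟩
    · have h3 : ¬ (z i ≤ x i) := of_decide_eq_false hi.symm
      push_neg at h3
      refine ⟨by linarith [h2.1], by linarith⟩

lemma exists_dyadic_scale {t : ℝ} (ht : 1 ≤ t) : ∃ k : ℕ, (2:ℝ)^k ≤ t ∧ t < 2^(k+1) := by
  set n := ⌊t⌋₊ with hn
  have hn1 : 1 ≤ n := Nat.le_floor (by exact_mod_cast ht)
  refine ⟨Nat.log 2 n, ?_, ?_⟩
  · calc ((2:ℝ))^(Nat.log 2 n) = ((2^(Nat.log 2 n) : ℕ) : ℝ) := by push_cast; ring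
      _ ≤ (n : ℝ) := by exact_mod_cast Nat.pow_log_le_self 2 (by omega)
      _ ≤ t := Nat.floor_le (by linarith)
  · calc t < n + 1 := Nat.lt_floor_add_one t
      _ ≤ ((2^(Nat.log 2 n + 1) : ℕ) : ℝ) := by
          exact_mod_cast Nat.lt_pow_succ_log_self (by norm_num) n
      _ = (2:ℝ)^(Nat.log 2 n + 1) := by push_cast; ring


lemma tail_full {d : ℕ} (m ε : ℝ) (hm : 0 ≤ m) (hε : 0 < ε)
    (μ : Measure (Fin d → ℝ))
    (hgrowth : ∀ x ρ, 0 < ρ → μ (Metric.ball x ρ) ≤ ENNReal.ofReal (ρ ^ m))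
    (y : Fin d → ℝ) (R : ℝ) (hR : 0 < R) :
    ∫⁻ x in {x | R ≤ dist x y}, ENNReal.ofReal (1 / dist x y ^ (m + ε)) ∂μ
      ≤ ENNReal.ofReal ((2 ^ m * (1 - 2 ^ (-ε))⁻¹) * R ^ (-ε)) := by
  have h2e1 : (2:ℝ) ^ (-ε) < 1 := Real.rpow_lt_one_of_one_lt_of_neg (by norm_num) (by linarith)
  have h2e0 : (0:ℝ) ≤ 2 ^ (-ε) := Real.rpow_nonneg (by norm_num) _
  have h2e : (0:ℝ) < 1 - 2 ^ (-ε) := by linarith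
  set A : ℕ → Set (Fin d → ℝ) := fun k => {x | 2^k * R ≤ dist x y ∧ dist x y < 2^(k+1) * R}
    with hA
  have hAm : ∀ k, MeasurableSet (A k) := by
    intro k
    have hd : Measurable fun x : Fin d → ℝ => dist x y := measurable_id.dist measurable_const
    exact (measurableSet_le measurable_const hd).inter (measurableSet_lt hd measurable_const)
  have hU : {x : Fin d → ℝ | R ≤ dist x y} = ⋃ k, A k := by
    ext x
    simp only [Set.mem_setOf_eq, Set.mem_iUnion, hA]
    constructor
    · intro hx
      obtain ⟨k, hk1, hk2⟩ := exists_dyadic_scale (t := dist x y / R)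
        ((one_le_div hR).mpr hx)
      exact ⟨k, (le_div_iff₀ hR).mp hk1, (div_lt_iff₀ hR).mp hk2⟩
    · rintro ⟨k, hk1, _⟩
      have h1 : (1:ℝ) ≤ 2^k := one_le_pow₀ (by norm_num)
      nlinarith
  have hdisj : Pairwise (Function.onFun Disjoint A) := by
    have hmain : ∀ k j, k < j → Disjoint (A k) (A j) := by
      intro k j hlt
      rw [Set.disjoint_left]
      rintro x ⟨_, hk2⟩ ⟨hj1, _⟩
      have : (2:ℝ)^(k+1) ≤ 2^j := pow_le_pow_right₀ (by norm_num) (by omega)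
      nlinarith
    intro k j hkj
    rcases hkj.lt_or_gt with h' | h'
    · exact hmain _ _ h'
    · exact (hmain _ _ h').symm
  have key : ∀ k : ℕ, (1 / ((2:ℝ)^k * R)^(m+ε)) * ((2:ℝ)^(k+1)*R)^m
      = 2^m * ((2:ℝ)^(-ε))^k * R^(-ε) := by
    intro k
    have hb : (0:ℝ) < (2:ℝ)^k := by positivity
    have hbR : (0:ℝ) < (2:ℝ)^k * R := by positivity
    have e1 : ((2:ℝ)^(k+1)*R)^m = 2^m * ((2:ℝ)^k)^m * R^m := by
      rw [show (2:ℝ)^(k+1)*R = 2 * ((2:ℝ)^k * R) by ring,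
        Real.mul_rpow (by norm_num) hbR.le, Real.mul_rpow hb.le hR.le]; ring
    have e2 : ((2:ℝ)^k*R)^(m+ε) = ((2:ℝ)^k)^m * ((2:ℝ)^k)^ε * (R^m * R^ε) := by
      rw [Real.mul_rpow hb.le hR.le, Real.rpow_add hb, Real.rpow_add hR]; try ring
    have e3 : ((2:ℝ)^(-ε))^k = ((2:ℝ)^k)^(-ε) := by
      rw [← Real.rpow_natCast ((2:ℝ)^(-ε)) k, ← Real.rpow_natCast (2:ℝ) k,
        ← Real.rpow_mul (by norm_num), ← Real.rpow_mul (by norm_num)]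
      ring_nf
    rw [e1, e2, e3, Real.rpow_neg hR.le, Real.rpow_neg hb.le]
    have h4 : ((2:ℝ)^k)^m ≠ 0 := by positivity
    have h5 : ((2:ℝ)^k)^ε ≠ 0 := by positivity
    have h6 : (R:ℝ)^m ≠ 0 := by positivity
    have h7 : (R:ℝ)^ε ≠ 0 := by positivity
    field_simp
  calc ∫⁻ x in {x | R ≤ dist x y}, ENNReal.ofReal (1 / dist x y ^ (m + ε)) ∂μ
      = ∑' k, ∫⁻ x in A k, ENNReal.ofReal (1 / dist x y ^ (m + ε)) ∂μ := by
        rw [hU, lintegral_iUnion hAm hdisj]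
    _ ≤ ∑' k, ENNReal.ofReal (2^m * ((2:ℝ)^(-ε))^k * R^(-ε)) := by
        refine ENNReal.tsum_le_tsum fun k => ?_
        have hbR : (0:ℝ) < (2:ℝ)^k * R := by positivity
        calc ∫⁻ x in A k, ENNReal.ofReal (1 / dist x y ^ (m + ε)) ∂μ
            ≤ ∫⁻ _ in A k, ENNReal.ofReal (1 / ((2:ℝ)^k * R)^(m+ε)) ∂μ := by
              refine setLIntegral_mono measurable_const fun x hx => ?_
              refine ENNReal.ofReal_le_ofReal ?_
              have hme : (0:ℝ) ≤ m + ε := by linarith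
              refine one_div_le_one_div_of_le (by positivity) ?_
              exact Real.rpow_le_rpow hbR.le hx.1 hme
          _ = ENNReal.ofReal (1 / ((2:ℝ)^k * R)^(m+ε)) * μ (A k) := setLIntegral_const _ _
          _ ≤ ENNReal.ofReal (1 / ((2:ℝ)^k * R)^(m+ε))
                * ENNReal.ofReal (((2:ℝ)^(k+1) * R)^m) := by
              refine mul_le_mul_right ?_ _
              refine le_trans (measure_mono fun x hx => ?_) (hgrowth y _ (by positivity))
              exact Metric.mem_ball.mpr hx.2
          _ = ENNReal.ofReal ((1 / ((2:ℝ)^k * R)^(m+ε)) * ((2:ℝ)^(k+1) * R)^m) :=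
              (ENNReal.ofReal_mul (by positivity)).symm
          _ = ENNReal.ofReal (2^m * ((2:ℝ)^(-ε))^k * R^(-ε)) := by rw [key k]
    _ = ENNReal.ofReal (2^m * R^(-ε)) * ∑' k, (ENNReal.ofReal ((2:ℝ)^(-ε)))^k := by
        rw [← ENNReal.tsum_mul_left]
        congr 1; funext k
        rw [← ENNReal.ofReal_pow h2e0, ← ENNReal.ofReal_mul (by positivity)]
        congr 1; ring
    _ = ENNReal.ofReal (2^m * R^(-ε)) * ENNReal.ofReal ((1 - 2^(-ε))⁻¹) := by
        rw [ENNReal.tsum_geometric, ← ENNReal.ofReal_one, ← ENNReal.ofReal_sub _ h2e0,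
          ENNReal.ofReal_inv_of_pos h2e]
    _ = ENNReal.ofReal ((2 ^ m * (1 - 2 ^ (-ε))⁻¹) * R ^ (-ε)) := by
        rw [← ENNReal.ofReal_mul (by positivity)]
        congr 1; ring

lemma pointwise_F_bound {d : ℕ} (m ε : ℝ) (hm : 0 ≤ m) (hε : 0 < ε)
    (μ : Measure (Fin d → ℝ))
    (K : (Fin d → ℝ) → (Fin d → ℝ) → ℝ)
    (hgrowth : ∀ x ρ, 0 < ρ → μ (Metric.ball x ρ) ≤ ENNReal.ofReal (ρ ^ m))
    (hsize : ∀ x y, x ≠ y → |K x y| ≤ 1 / dist x y ^ m)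
    (hholder : ∀ x y y', 2 * dist y y' ≤ dist x y →
      |K x y - K x y'| ≤ dist y y' ^ ε / dist x y ^ (m + ε))
    (zS zQ : Fin d → ℝ) (ℓS ℓQ : ℝ)
    (hℓQ : 0 < ℓQ) (hQS : ℓQ ≤ ℓS)
    (hsub : dyadicCube zQ ℓQ ⊆ dyadicCube zS ℓS)
    (y : Fin d → ℝ) (hy : y ∈ dyadicCube zQ ℓQ) :
    |∫ x in (dyadicCube zS (1.1 * ℓS))ᶜ, (K x y - K x zQ) ∂μ|
      ≤ ((2 ^ m * (1 - 2 ^ (-ε))⁻¹) * 10 ^ ε + 2 * 20 ^ (m + ε)) * (ℓQ / ℓS) ^ ε := by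
  have hℓS : (0:ℝ) < ℓS := lt_of_lt_of_le hℓQ hQS
  have h2e1 : (2:ℝ) ^ (-ε) < 1 := Real.rpow_lt_one_of_one_lt_of_neg (by norm_num) (by linarith)
  have h2e : (0:ℝ) < 1 - 2 ^ (-ε) := by linarith
  set C1 : ℝ := (2 ^ m * (1 - 2 ^ (-ε))⁻¹) * 10 ^ ε with hC1
  set C2 : ℝ := 2 * 20 ^ (m + ε) with hC2
  have hC1pos : 0 < C1 := by
    apply mul_pos (mul_pos (Real.rpow_pos_of_pos (by norm_num) m) (by positivity))
    exact Real.rpow_pos_of_pos (by norm_num) ε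
  have hC2pos : 0 < C2 := by
    have := Real.rpow_pos_of_pos (show (0:ℝ) < 20 by norm_num) (m + ε); linarith
  have hr : (0:ℝ) < ℓQ / ℓS := by positivity
  have hzQ : zQ ∈ dyadicCube zQ ℓQ := fun i => ⟨by linarith, by linarith⟩
  have hyS : y ∈ dyadicCube zS ℓS := hsub hy
  have hzQS : zQ ∈ dyadicCube zS ℓS := hsub hzQ
  set S' : Set (Fin d → ℝ) := dyadicCube zS (1.1 * ℓS) with hS'
  set g : (Fin d → ℝ) → ℝ := fun x => K x y - K x zQ with hg
  set s : Set (Fin d → ℝ) := S'ᶜ ∩ {x | ℓQ ≤ dist x y} with hs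
  set t : Set (Fin d → ℝ) := S'ᶜ ∩ {x | dist x y < ℓQ} with ht
  have htm : MeasurableSet t :=
    (measurableSet_dyadicCube zS (1.1 * ℓS)).compl.inter
      (measurableSet_lt (measurable_id.dist measurable_const) measurable_const)
  have hst : Disjoint s t := by
    rw [Set.disjoint_left]
    rintro x ⟨_, hx2⟩ ⟨_, hx4⟩
    simp only [Set.mem_setOf_eq] at hx2 hx4
    linarith
  have hunion : S'ᶜ = s ∪ t := by
    ext x
    simp only [hs, ht, Set.mem_union, Set.mem_inter_iff, Set.mem_setOf_eq]
    rcases le_or_gt ℓQ (dist x y) with h | h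
    · tauto
    · tauto
  -- piece 1
  have hpiece1 : ∫⁻ x in s, ENNReal.ofReal |g x| ∂μ ≤ ENNReal.ofReal (C1 * (ℓQ / ℓS) ^ ε) := by
    have hmeas : Measurable fun x : Fin d → ℝ =>
        ENNReal.ofReal ((ℓQ / 2) ^ ε * (1 / dist x y ^ (m + ε))) := by
      apply ENNReal.measurable_ofReal.comp
      have hd : Continuous fun x : Fin d → ℝ => dist x y := continuous_id.dist continuous_const
      have hme : Measurable fun x : Fin d → ℝ => dist x y ^ (m + ε) :=
        ((Real.continuous_rpow_const (by linarith)).comp hd).measurable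
      exact (measurable_const.div hme).const_mul _
    have step1 : ∫⁻ x in s, ENNReal.ofReal |g x| ∂μ
        ≤ ∫⁻ x in s, ENNReal.ofReal ((ℓQ / 2) ^ ε * (1 / dist x y ^ (m + ε))) ∂μ := by
      refine setLIntegral_mono hmeas fun x hx => ?_
      refine ENNReal.ofReal_le_ofReal ?_
      have hfar : ℓS / 20 ≤ dist x y := far_from_S hℓS hx.1 hyS
      have hd0 : (0:ℝ) < dist x y := by linarith
      have hdyz : dist y zQ ≤ ℓQ / 2 := dist_center_le hℓQ hy
      have hh := hholder x y zQ (by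
        have := hx.2
        simp only [Set.mem_setOf_eq] at this
        linarith)
      refine hh.trans ?_
      rw [mul_one_div, div_le_div_iff₀ (by positivity) (by positivity)]
      have : dist y zQ ^ ε ≤ (ℓQ / 2) ^ ε :=
        Real.rpow_le_rpow dist_nonneg hdyz hε.le
      nlinarith [Real.rpow_pos_of_pos hd0 (m + ε), this,
        Real.rpow_nonneg (dist_nonneg (x := y) (y := zQ)) ε]
    have step2 : ∫⁻ x in s, ENNReal.ofReal ((ℓQ / 2) ^ ε * (1 / dist x y ^ (m + ε))) ∂μ
        = ENNReal.ofReal ((ℓQ / 2) ^ ε)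
          * ∫⁻ x in s, ENNReal.ofReal (1 / dist x y ^ (m + ε)) ∂μ := by
      rw [← lintegral_const_mul' _ _ ENNReal.ofReal_ne_top]
      congr 1; funext x
      rw [← ENNReal.ofReal_mul (by positivity)]
    have step3 : ∫⁻ x in s, ENNReal.ofReal (1 / dist x y ^ (m + ε)) ∂μ
        ≤ ENNReal.ofReal ((2 ^ m * (1 - 2 ^ (-ε))⁻¹) * (ℓS / 20) ^ (-ε)) := by
      refine le_trans (lintegral_mono_set fun x hx => ?_) (tail_full m ε hm hε μ hgrowth y
        (ℓS / 20) (by linarith))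
      exact far_from_S hℓS hx.1 hyS
    calc ∫⁻ x in s, ENNReal.ofReal |g x| ∂μ
        ≤ _ := step1
      _ = _ := step2
      _ ≤ ENNReal.ofReal ((ℓQ / 2) ^ ε)
            * ENNReal.ofReal ((2 ^ m * (1 - 2 ^ (-ε))⁻¹) * (ℓS / 20) ^ (-ε)) :=
          mul_le_mul_right step3 _
      _ = ENNReal.ofReal ((ℓQ / 2) ^ ε * ((2 ^ m * (1 - 2 ^ (-ε))⁻¹) * (ℓS / 20) ^ (-ε))) :=
          (ENNReal.ofReal_mul (by positivity)).symm
      _ = ENNReal.ofReal (C1 * (ℓQ / ℓS) ^ ε) := by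
          congr 1
          have e0 : ((ℓQ / 2) / (ℓS / 20) : ℝ) = 10 * (ℓQ / ℓS) := by
            field_simp; ring
          have e1 : (ℓQ / 2 : ℝ) ^ ε * ((ℓS / 20) ^ ε)⁻¹ = 10 ^ ε * (ℓQ / ℓS) ^ ε := by
            rw [← div_eq_mul_inv, ← Real.div_rpow (by positivity) (by positivity), e0,
              Real.mul_rpow (by norm_num) hr.le]
          rw [Real.rpow_neg (show (0:ℝ) ≤ ℓS / 20 by positivity) ε, hC1]
          linear_combination (2 ^ m * (1 - 2 ^ (-ε))⁻¹) * e1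
  -- piece 2
  have hpiece2 : ∫⁻ x in t, ENNReal.ofReal |g x| ∂μ ≤ ENNReal.ofReal (C2 * (ℓQ / ℓS) ^ ε) := by
    rcases le_or_gt (20 * ℓQ) ℓS with hcase | hcase
    · have hte : t = ∅ := by
        ext x
        simp only [ht, Set.mem_inter_iff, Set.mem_setOf_eq, Set.mem_empty_iff_false,
          iff_false, not_and]
        intro hx1 hx2
        have hfar : ℓS / 20 ≤ dist x y := far_from_S hℓS hx1 hyS
        linarith
      rw [hte, Measure.restrict_empty, lintegral_zero_measure]
      exact zero_le
    · have hstep : ∫⁻ x in t, ENNReal.ofReal |g x| ∂μ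
          ≤ ∫⁻ _ in t, ENNReal.ofReal (2 / (ℓS / 20) ^ m) ∂μ := by
        refine setLIntegral_mono measurable_const fun x hx => ?_
        refine ENNReal.ofReal_le_ofReal ?_
        have hfar1 : ℓS / 20 ≤ dist x y := far_from_S hℓS hx.1 hyS
        have hfar2 : ℓS / 20 ≤ dist x zQ := far_from_S hℓS hx.1 hzQS
        have hb : (0:ℝ) < (ℓS / 20) ^ m := Real.rpow_pos_of_pos (by linarith) m
        have h1 : |K x y| ≤ 1 / (ℓS / 20) ^ m := by
          refine (hsize x y (dist_pos.mp (by linarith))).trans ?_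
          exact one_div_le_one_div_of_le hb
            (Real.rpow_le_rpow (by linarith) hfar1 hm)
        have h2 : |K x zQ| ≤ 1 / (ℓS / 20) ^ m := by
          refine (hsize x zQ (dist_pos.mp (by linarith))).trans ?_
          exact one_div_le_one_div_of_le hb
            (Real.rpow_le_rpow (by linarith) hfar2 hm)
        calc |g x| ≤ |K x y| + |K x zQ| := abs_sub _ _
          _ ≤ 1 / (ℓS / 20) ^ m + 1 / (ℓS / 20) ^ m := add_le_add h1 h2
          _ = 2 / (ℓS / 20) ^ m := by ring
      refine hstep.trans ?_
      rw [setLIntegral_const]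
      have hμt : μ t ≤ ENNReal.ofReal (ℓQ ^ m) := by
        refine le_trans (measure_mono fun x hx => ?_) (hgrowth y ℓQ hℓQ)
        exact Metric.mem_ball.mpr hx.2
      calc ENNReal.ofReal (2 / (ℓS / 20) ^ m) * μ t
          ≤ ENNReal.ofReal (2 / (ℓS / 20) ^ m) * ENNReal.ofReal (ℓQ ^ m) :=
            mul_le_mul_right hμt _
        _ = ENNReal.ofReal (2 / (ℓS / 20) ^ m * ℓQ ^ m) :=
            (ENNReal.ofReal_mul (by positivity)).symm
        _ ≤ ENNReal.ofReal (C2 * (ℓQ / ℓS) ^ ε) := by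
            refine ENNReal.ofReal_le_ofReal ?_
            have ha : (1:ℝ) ≤ 20 * ℓQ / ℓS := by
              rw [le_div_iff₀ hℓS]; linarith
            have hb : (20 * ℓQ / ℓS : ℝ) ≤ 20 := by
              rw [div_le_iff₀ hℓS]; linarith
            have e2 : (ℓQ:ℝ) ^ m / (ℓS / 20) ^ m = (20 * ℓQ / ℓS) ^ m := by
              rw [← Real.div_rpow hℓQ.le (by positivity)]
              congr 1
              field_simp
            have h3 : ((20:ℝ) * ℓQ / ℓS) ^ m ≤ 20 ^ m :=
              Real.rpow_le_rpow (by positivity) hb hm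
            have h4 : (1:ℝ) ≤ (20 * ℓQ / ℓS) ^ ε := Real.one_le_rpow ha hε.le
            have e5 : ((20:ℝ) * ℓQ / ℓS) ^ ε = 20 ^ ε * (ℓQ / ℓS) ^ ε := by
              rw [mul_div_assoc, Real.mul_rpow (by norm_num) hr.le]
            have e6 : (20:ℝ) ^ (m + ε) = 20 ^ m * 20 ^ ε :=
              Real.rpow_add (by norm_num) m ε
            have h7 : (0:ℝ) < 20 ^ m := Real.rpow_pos_of_pos (by norm_num) m
            have h8 : (0:ℝ) < 20 ^ ε := Real.rpow_pos_of_pos (by norm_num) ε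
            have h9 : (0:ℝ) ≤ (ℓQ / ℓS) ^ ε := Real.rpow_nonneg hr.le ε
            calc (2:ℝ) / (ℓS / 20) ^ m * ℓQ ^ m = 2 * ((20 * ℓQ / ℓS) ^ m) := by
                  rw [← e2]; ring
              _ ≤ 2 * 20 ^ m := by linarith
              _ ≤ 2 * 20 ^ m * (20 ^ ε * (ℓQ / ℓS) ^ ε) := by
                  rw [← e5]; nlinarith
              _ = C2 * (ℓQ / ℓS) ^ ε := by rw [hC2, e6]; ring
  -- combine
  have h0 : |∫ x in S'ᶜ, g x ∂μ| ≤ (∫⁻ x in S'ᶜ, ENNReal.ofReal |g x| ∂μ).toReal := by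
    simpa [Real.norm_eq_abs] using norm_integral_le_lintegral_norm (μ := μ.restrict S'ᶜ) g
  refine h0.trans ?_
  have hCp : (0:ℝ) ≤ (C1 + C2) * (ℓQ / ℓS) ^ ε :=
    mul_nonneg (by linarith) (Real.rpow_nonneg hr.le ε)
  refine le_trans (ENNReal.toReal_le_of_le_ofReal hCp ?_) (le_of_eq (by ring))
  rw [hunion, lintegral_union htm hst]
  calc (∫⁻ x in s, ENNReal.ofReal |g x| ∂μ) + ∫⁻ x in t, ENNReal.ofReal |g x| ∂μ
      ≤ ENNReal.ofReal (C1 * (ℓQ / ℓS) ^ ε) + ENNReal.ofReal (C2 * (ℓQ / ℓS) ^ ε) :=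
        add_le_add hpiece1 hpiece2
    _ = ENNReal.ofReal ((C1 + C2) * (ℓQ / ℓS) ^ ε) := by
        rw [← ENNReal.ofReal_add (mul_nonneg hC1pos.le (Real.rpow_nonneg hr.le ε))
          (mul_nonneg hC2pos.le (Real.rpow_nonneg hr.le ε))]
        congr 1; ring

lemma cubeAvg_abs_le {d : ℕ} (μ : Measure (Fin d → ℝ)) [IsFiniteMeasure μ]
    (A : Set (Fin d → ℝ)) (F : (Fin d → ℝ) → ℝ) (M : ℝ) (hM : 0 ≤ M)
    (hF : ∀ x ∈ A, |F x| ≤ M) : |cubeAvg μ A F| ≤ M := by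
  have hnum : |∫ x in A, F x ∂μ| ≤ M * (μ A).toReal := by
    have h1 : |∫ x in A, F x ∂μ| ≤ (∫⁻ x in A, ENNReal.ofReal ‖F x‖ ∂μ).toReal := by
      simpa [Real.norm_eq_abs] using norm_integral_le_lintegral_norm (μ := μ.restrict A) F
    refine h1.trans ?_
    have h2 : ∫⁻ x in A, ENNReal.ofReal ‖F x‖ ∂μ ≤ ∫⁻ _ in A, ENNReal.ofReal M ∂μ :=
      setLIntegral_mono measurable_const fun x hx =>
        ENNReal.ofReal_le_ofReal (by simpa [Real.norm_eq_abs] using hF x hx)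
    have h3 : (∫⁻ _ in A, ENNReal.ofReal M ∂μ) = ENNReal.ofReal M * μ A :=
      setLIntegral_const _ _
    calc (∫⁻ x in A, ENNReal.ofReal ‖F x‖ ∂μ).toReal
        ≤ (ENNReal.ofReal M * μ A).toReal := by
          refine ENNReal.toReal_mono ?_ (h3 ▸ h2)
          exact ENNReal.mul_ne_top ENNReal.ofReal_ne_top (measure_ne_top μ A)
      _ = M * (μ A).toReal := by
          rw [ENNReal.toReal_mul, ENNReal.toReal_ofReal hM]
  rw [cubeAvg, abs_div, abs_of_nonneg (ENNReal.toReal_nonneg (a := μ A))]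
  rcases eq_or_lt_of_le (ENNReal.toReal_nonneg (a := μ A)) with h0 | h0
  · rw [← h0, div_zero]; exact hM
  · rw [div_le_iff₀ h0]; exact hnum

lemma abs_mdiff_le {d : ℕ} (μ : Measure (Fin d → ℝ)) [IsFiniteMeasure μ]
    (z : Fin d → ℝ) (ℓ : ℝ) (F : (Fin d → ℝ) → ℝ) (M : ℝ) (hM : 0 ≤ M)
    (hF : ∀ y ∈ dyadicCube z ℓ, |F y| ≤ M) (x : Fin d → ℝ) :
    |mdiff μ z ℓ F x| ≤ Set.indicator (dyadicCube z ℓ) (fun _ => 2 * M) x := by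
  by_cases hx : x ∈ dyadicCube z ℓ
  · rw [Set.indicator_of_mem hx]
    have havg : ∀ σ : Fin d → Bool,
        |cubeAvg μ (dyadicCube (childCenter z ℓ σ) (ℓ / 2)) F| ≤ M := fun σ =>
      cubeAvg_abs_le μ _ F M hM fun w hw => hF w (child_subset z ℓ σ hw)
    have hsum : |∑ σ : Fin d → Bool,
        Set.indicator (dyadicCube (childCenter z ℓ σ) (ℓ / 2))
          (fun _ => cubeAvg μ (dyadicCube (childCenter z ℓ σ) (ℓ / 2)) F) x| ≤ M := by
      set σ₀ : Fin d → Bool := fun i => decide (z i ≤ x i) with hσ₀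
      rw [Finset.sum_eq_single σ₀]
      · by_cases h : x ∈ dyadicCube (childCenter z ℓ σ₀) (ℓ / 2)
        · rw [Set.indicator_of_mem h]; exact havg σ₀
        · rw [Set.indicator_of_notMem h]; simpa using hM
      · intro σ _ hσ
        rw [Set.indicator_of_notMem]
        intro hmem
        exact hσ (funext fun i => (mem_child_iff hx σ).mp hmem i)
      · intro h; exact absurd (Finset.mem_univ σ₀) h
    have hQ : |Set.indicator (dyadicCube z ℓ)
        (fun _ => cubeAvg μ (dyadicCube z ℓ) F) x| ≤ M := by
      rw [Set.indicator_of_mem hx]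
      exact cubeAvg_abs_le μ _ F M hM hF
    calc |mdiff μ z ℓ F x| ≤ _ + _ := abs_sub _ _
      _ ≤ M + M := add_le_add hsum hQ
      _ = 2 * M := by ring
  · rw [Set.indicator_of_notMem hx]
    have hc : ∀ σ : Fin d → Bool, x ∉ dyadicCube (childCenter z ℓ σ) (ℓ / 2) :=
      fun σ hmem => hx (child_subset z ℓ σ hmem)
    have : mdiff μ z ℓ F x = 0 := by
      simp only [mdiff, Set.indicator_of_notMem hx, sub_zero]
      exact Finset.sum_eq_zero fun σ _ => Set.indicator_of_notMem (hc σ) _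
    rw [this]; simp

/-- for a CZ kernel of order `m`, parameter `ε`, a measure of growth `m`
satisfying the `T^*1` testing condition, a dyadic cube `Q ⊆ S` and `S' = 1.1·S`, the
martingale difference of `T^*(1 - 1_{S'})` on `Q` (realized, modulo the additive
constant killed by `Δ_Q`, as `y ↦ ∫_{S'ᶜ} (K(x,y) − K(x,z_Q)) dμ(x)`) satisfies
`‖Δ_Q T^*(1−1_{S'})‖²_{L²(μ)} ≤ C μ(Q) (ℓQ/ℓS)^{2ε}` with `C = C(d,m,ε)`. -/
theorem mdiff_far_part_estimate (d : ℕ) (m ε : ℝ) (hm : 0 ≤ m) (hε : 0 < ε) :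
    ∃ C : ℝ, 0 < C ∧
      ∀ (μ : Measure (Fin d → ℝ)) (_ : IsFiniteMeasure μ)
        (K : (Fin d → ℝ) → (Fin d → ℝ) → ℝ) (C₀ : ℝ),
        Measurable (Function.uncurry K) →
        (∀ x ρ, 0 < ρ → μ (Metric.ball x ρ) ≤ ENNReal.ofReal (ρ ^ m)) →
        (∀ x y, x ≠ y → |K x y| ≤ 1 / dist x y ^ m) →
        (∀ x y y', 2 * dist y y' ≤ dist x y →
          |K x y - K x y'| ≤ dist y y' ^ ε / dist x y ^ (m + ε)) →
        (∀ (zP : Fin d → ℝ) (ℓP : ℝ), 0 < ℓP →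
          ∫ y, (∫ x in dyadicCube zP ℓP, K x y ∂μ) ^ 2 ∂μ
            ≤ C₀ * (μ (dyadicCube zP ℓP)).toReal) →
      ∀ (zS zQ : Fin d → ℝ) (ℓS ℓQ : ℝ),
        0 < ℓQ → ℓQ ≤ ℓS →
        dyadicCube zQ ℓQ ⊆ dyadicCube zS ℓS →
        ∫ x, (mdiff μ zQ ℓQ
            (fun y => ∫ x in (dyadicCube zS (1.1 * ℓS))ᶜ, (K x y - K x zQ) ∂μ) x) ^ 2 ∂μ
          ≤ C * (μ (dyadicCube zQ ℓQ)).toReal * (ℓQ / ℓS) ^ (2 * ε) := by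
  set Cp : ℝ := (2 ^ m * (1 - 2 ^ (-ε))⁻¹) * 10 ^ ε + 2 * 20 ^ (m + ε) with hCp
  have h2e1 : (2:ℝ) ^ (-ε) < 1 := Real.rpow_lt_one_of_one_lt_of_neg (by norm_num) (by linarith)
  have h2e : (0:ℝ) < 1 - 2 ^ (-ε) := by linarith
  have hCppos : 0 < Cp := by
    have h1 : (0:ℝ) < 2 ^ m * (1 - 2 ^ (-ε))⁻¹ * 10 ^ ε :=
      mul_pos (mul_pos (Real.rpow_pos_of_pos (by norm_num) m) (by positivity))
        (Real.rpow_pos_of_pos (by norm_num) ε)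
    have h2 : (0:ℝ) < 20 ^ (m + ε) := Real.rpow_pos_of_pos (by norm_num) (m + ε)
    rw [hCp]; linarith
  refine ⟨4 * Cp ^ 2, by positivity, ?_⟩
  intro μ hfin K C₀ hKmeas hgrowth hsize hholder _ zS zQ ℓS ℓQ hℓQ hQS hsub
  have hℓS : (0:ℝ) < ℓS := lt_of_lt_of_le hℓQ hQS
  have hr : (0:ℝ) < ℓQ / ℓS := by positivity
  set F : (Fin d → ℝ) → ℝ :=
    fun y => ∫ x in (dyadicCube zS (1.1 * ℓS))ᶜ, (K x y - K x zQ) ∂μ with hF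
  set M : ℝ := Cp * (ℓQ / ℓS) ^ ε with hM
  have hMnn : 0 ≤ M := mul_nonneg hCppos.le (Real.rpow_nonneg hr.le ε)
  have hFb : ∀ y ∈ dyadicCube zQ ℓQ, |F y| ≤ M := fun y hy =>
    pointwise_F_bound m ε hm hε μ K hgrowth hsize hholder zS zQ ℓS ℓQ hℓQ hQS hsub y hy
  have hbd := abs_mdiff_le μ zQ ℓQ F M hMnn hFb
  have hQm : MeasurableSet (dyadicCube zQ ℓQ) := measurableSet_dyadicCube zQ ℓQ
  have hgint : Integrable
      (Set.indicator (dyadicCube zQ ℓQ) (fun _ => (2 * M) ^ 2)) μ := by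
    rw [integrable_indicator_iff hQm]
    exact integrableOn_const (measure_ne_top μ _)
  have hpt : ∀ x, (mdiff μ zQ ℓQ F x) ^ 2
      ≤ Set.indicator (dyadicCube zQ ℓQ) (fun _ => (2 * M) ^ 2) x := by
    intro x
    by_cases hx : x ∈ dyadicCube zQ ℓQ
    · rw [Set.indicator_of_mem hx]
      have h1 := hbd x
      rw [Set.indicator_of_mem hx] at h1
      calc (mdiff μ zQ ℓQ F x) ^ 2 = |mdiff μ zQ ℓQ F x| ^ 2 := (sq_abs _).symm
        _ ≤ (2 * M) ^ 2 := by nlinarith [abs_nonneg (mdiff μ zQ ℓQ F x)]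
    · rw [Set.indicator_of_notMem hx]
      have h1 := hbd x
      rw [Set.indicator_of_notMem hx] at h1
      have : mdiff μ zQ ℓQ F x = 0 := abs_eq_zero.mp (le_antisymm h1 (abs_nonneg _))
      rw [this]; norm_num
  calc ∫ x, (mdiff μ zQ ℓQ F x) ^ 2 ∂μ
      ≤ ∫ x, Set.indicator (dyadicCube zQ ℓQ) (fun _ => (2 * M) ^ 2) x ∂μ :=
        integral_mono_of_nonneg (Filter.Eventually.of_forall fun x => sq_nonneg _)
          hgint (Filter.Eventually.of_forall hpt)
    _ = (μ (dyadicCube zQ ℓQ)).toReal * (2 * M) ^ 2 := by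
        rw [integral_indicator hQm, setIntegral_const, smul_eq_mul]; rfl
    _ = 4 * Cp ^ 2 * (μ (dyadicCube zQ ℓQ)).toReal * (ℓQ / ℓS) ^ (2 * ε) := by
        have e1 : ((ℓQ / ℓS) ^ ε) ^ 2 = (ℓQ / ℓS) ^ (2 * ε) := by
          rw [← Real.rpow_natCast ((ℓQ / ℓS) ^ ε) 2, ← Real.rpow_mul hr.le]
          norm_num [mul_comm]
        rw [hM, ← e1]; ring
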